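/- Let 0 ≤ l ≤ n and 1 ≤ k,m ≤ n be integers with n−k ≥ m−l and l ≤ min(k,m). For any m-dimensional linear subspace W of F_p^n, the number of (n−k)-dimensional linear subspaces V of F_p^n such that #(π*_V(W)) ≤ p^l is comparable (with constants depending only on n,k,m,l) to p^{k(n-k)−(k−l)(m−l)}. -/

import Mathlib

open Module Submodule

section Gen
variable {α β : Type*} [Finite α] [Finite β]

lemma aux_card_eq_sum_fibers (f : α → β) [Fintype β] :
    Nat.card α = ∑ b, Nat.card {a // f a = b} := by
  classical
  cases nonempty_fintype α
  simp only [Nat.card_eq_fintype_card]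
  rw [← Fintype.card_sigma]
  exact Fintype.card_congr (Equiv.sigmaFiberEquiv f).symm

lemma aux_card_le_of_fiber_le (f : α → β) {t : ℕ}
    (h : ∀ b, Nat.card {a // f a = b} ≤ t) : Nat.card α ≤ Nat.card β * t := by
  classical
  cases nonempty_fintype β
  rw [aux_card_eq_sum_fibers f, Nat.card_eq_fintype_card]
  calc ∑ b, Nat.card {a // f a = b} ≤ ∑ _b : β, t := Finset.sum_le_sum fun b _ => h b
  _ = Fintype.card β * t := by rw [Finset.sum_const, Finset.card_univ, smul_eq_mul]

lemma aux_mul_le_card (f : α → β) {t u : ℕ}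
    (h : ∀ b, t ≤ u * Nat.card {a // f a = b}) : Nat.card β * t ≤ u * Nat.card α := by
  classical
  cases nonempty_fintype β
  rw [aux_card_eq_sum_fibers f, Nat.card_eq_fintype_card, Finset.mul_sum]
  calc Fintype.card β * t = ∑ _b : β, t := by rw [Finset.sum_const, Finset.card_univ, smul_eq_mul]
  _ ≤ ∑ b, u * Nat.card {a // f a = b} := Finset.sum_le_sum fun b _ => h b

end Gen

section ProdBounds

lemma aux_prod_le {q N j : ℕ} : ∏ i : Fin j, (q ^ N - q ^ i.val) ≤ q ^ (N * j) := by
  calc ∏ i : Fin j, (q ^ N - q ^ i.val) ≤ ∏ _i : Fin j, q ^ N :=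
        Finset.prod_le_prod' fun i _ => Nat.sub_le _ _
  _ = q ^ (N * j) := by simp [Finset.prod_const, ← pow_mul]

lemma aux_le_prod {q N j : ℕ} (hq : 2 ≤ q) (hj : j ≤ N) :
    q ^ (N * j) ≤ 2 ^ j * ∏ i : Fin j, (q ^ N - q ^ i.val) := by
  have key : ∀ i : Fin j, q ^ N ≤ 2 * (q ^ N - q ^ i.val) := by
    intro i
    have hi : i.val + 1 ≤ N := le_trans i.2 hj
    have h1 : q ^ i.val * 2 ≤ q ^ (i.val + 1) := by
      rw [pow_succ]; exact Nat.mul_le_mul_left _ hq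
    have h2 : q ^ (i.val + 1) ≤ q ^ N := Nat.pow_le_pow_right (by omega) hi
    omega
  calc q ^ (N * j) = ∏ _i : Fin j, q ^ N := by simp [Finset.prod_const, ← pow_mul]
  _ ≤ ∏ i : Fin j, 2 * (q ^ N - q ^ i.val) := Finset.prod_le_prod' fun i _ => key i
  _ = 2 ^ j * ∏ i : Fin j, (q ^ N - q ^ i.val) := by
      rw [Finset.prod_mul_distrib]; simp [Finset.prod_const]

end ProdBounds

section Field
variable {K V : Type*} [Field K] [Fintype K] [AddCommGroup V] [Module K V] [Finite V]

local instance : Finite (Submodule K V) :=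
  Finite.of_injective (fun U => (U : Set V)) SetLike.coe_injective

lemma aux_natCard_eq (W : Type*) [AddCommGroup W] [Module K W] [Finite W] :
    Nat.card W = Fintype.card K ^ finrank K W := by
  cases nonempty_fintype W
  rw [Nat.card_eq_fintype_card]
  exact card_eq_pow_finrank

/-- fiber equivalence for span map -/
noncomputable def auxFiberEquiv {j : ℕ} (U : {U : Submodule K V // finrank K U = j}) :
    {x : {s : Fin j → V // LinearIndependent K s} // span K (Set.range x.1) = U.1} ≃
      {t : Fin j → U.1 // LinearIndependent K t} where
  toFun x := ⟨fun i => ⟨x.1.1 i, (le_of_eq x.2) (subset_span (Set.mem_range_self i))⟩, by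
    apply LinearIndependent.of_comp U.1.subtype
    exact x.1.2⟩
  invFun t := ⟨⟨fun i => (t.1 i : V), t.2.map' U.1.subtype (ker_subtype U.1)⟩, by
    have h1 : Set.range (fun i => (t.1 i : V)) = U.1.subtype '' Set.range t.1 := by
      rw [← Set.range_comp]; rfl
    rw [h1, Submodule.span_image]
    have h2 : span K (Set.range t.1) = ⊤ := by
      apply Submodule.eq_top_of_finrank_eq
      rw [finrank_span_eq_card t.2, Fintype.card_fin, U.2]
    rw [h2, Submodule.map_subtype_top]⟩
  left_inv x := by ext i; rfl
  right_inv t := by ext i; rfl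

lemma aux_card_subspaces_mul {j : ℕ} (hj : j ≤ finrank K V) :
    Nat.card {U : Submodule K V // finrank K U = j} *
      ∏ i : Fin j, (Fintype.card K ^ j - Fintype.card K ^ i.val) =
    ∏ i : Fin j, (Fintype.card K ^ finrank K V - Fintype.card K ^ i.val) := by
  classical
  cases nonempty_fintype V
  rw [← card_linearIndependent (K := K) (V := V) hj]
  let f : {s : Fin j → V // LinearIndependent K s} → {U : Submodule K V // finrank K U = j} :=
    fun s => ⟨span K (Set.range s.1), by rw [finrank_span_eq_card s.2, Fintype.card_fin]⟩
  cases nonempty_fintype {U : Submodule K V // finrank K U = j}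
  rw [aux_card_eq_sum_fibers f]
  have hfib : ∀ U : {U : Submodule K V // finrank K U = j},
      Nat.card {x // f x = U} = ∏ i : Fin j, (Fintype.card K ^ j - Fintype.card K ^ i.val) := by
    intro U
    have e1 : {x // f x = U} ≃ {t : Fin j → U.1 // LinearIndependent K t} := by
      refine Equiv.trans (Equiv.subtypeEquivRight fun x => ?_) (auxFiberEquiv U)
      constructor
      · intro h; exact congrArg Subtype.val h
      · intro h; exact Subtype.ext h
    rw [Nat.card_congr e1, card_linearIndependent (K := K) (V := U.1) (le_of_eq U.2.symm), U.2]
  rw [Finset.sum_congr rfl fun U _ => hfib U, Finset.sum_const, Finset.card_univ, smul_eq_mul,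
    Nat.card_eq_fintype_card]

lemma aux_card_subspaces_le {j : ℕ} (hj : j ≤ finrank K V) :
    Nat.card {U : Submodule K V // finrank K U = j} ≤
      2 ^ j * Fintype.card K ^ (j * (finrank K V - j)) := by
  set q := Fintype.card K with hq
  have hq2 : 2 ≤ q := Fintype.one_lt_card
  set N := finrank K V
  set A := Nat.card {U : Submodule K V // finrank K U = j}
  have key := aux_card_subspaces_mul (K := K) (V := V) hj
  have h1 : A * q ^ (j * j) ≤ 2 ^ j * (q ^ (j * (N - j)) * q ^ (j * j)) := by
    calc A * q ^ (j * j) ≤ A * (2 ^ j * ∏ i : Fin j, (q ^ j - q ^ i.val)) :=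
          Nat.mul_le_mul_left A (aux_le_prod hq2 le_rfl)
    _ = 2 ^ j * (A * ∏ i : Fin j, (q ^ j - q ^ i.val)) := by ring
    _ = 2 ^ j * ∏ i : Fin j, (q ^ N - q ^ i.val) := by rw [key]
    _ ≤ 2 ^ j * q ^ (N * j) := Nat.mul_le_mul_left _ aux_prod_le
    _ = 2 ^ j * (q ^ (j * (N - j)) * q ^ (j * j)) := by
        rw [← pow_add]
        congr 1
        have : j * (N - j) + j * j = N * j := by
          rw [← Nat.mul_add, Nat.sub_add_cancel hj, Nat.mul_comm]
        rw [this]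
  have hpos : 0 < q ^ (j * j) := Nat.pow_pos (by omega)
  calc A ≤ 2 ^ j * q ^ (j * (N - j)) := by
        apply Nat.le_of_mul_le_mul_right _ hpos
        calc A * q ^ (j*j) ≤ 2 ^ j * (q ^ (j * (N - j)) * q ^ (j * j)) := h1
        _ = 2 ^ j * q ^ (j * (N - j)) * q ^ (j * j) := by ring

lemma aux_le_card_subspaces {j : ℕ} (hj : j ≤ finrank K V) :
    Fintype.card K ^ (j * (finrank K V - j)) ≤
      2 ^ j * Nat.card {U : Submodule K V // finrank K U = j} := by
  set q := Fintype.card K with hq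
  have hq2 : 2 ≤ q := Fintype.one_lt_card
  set N := finrank K V
  set A := Nat.card {U : Submodule K V // finrank K U = j}
  have key := aux_card_subspaces_mul (K := K) (V := V) hj
  have hpos : 0 < q ^ (j * j) := Nat.pow_pos (by omega)
  apply Nat.le_of_mul_le_mul_right _ hpos
  calc q ^ (j * (N - j)) * q ^ (j * j) = q ^ (N * j) := by
        rw [← pow_add]
        congr 1
        rw [← Nat.mul_add, Nat.sub_add_cancel hj, Nat.mul_comm]
  _ ≤ 2 ^ j * ∏ i : Fin j, (q ^ N - q ^ i.val) := aux_le_prod hq2 hj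
  _ = 2 ^ j * (A * ∏ i : Fin j, (q ^ j - q ^ i.val)) := by rw [key]
  _ ≤ 2 ^ j * (A * q ^ (j * j)) := by
        apply Nat.mul_le_mul_left
        exact Nat.mul_le_mul_left A (by simpa using aux_prod_le (q := q) (N := j) (j := j))
  _ = 2 ^ j * A * q ^ (j * j) := by ring

lemma aux_finrank_map_add_inf_ker {V' : Type*} [AddCommGroup V'] [Module K V']
    (f : V →ₗ[K] V') (W : Submodule K V) :
    finrank K (W.map f) + finrank K ((LinearMap.ker f ⊓ W : Submodule K V)) = finrank K W := by
  have h0 := LinearMap.finrank_range_add_finrank_ker (f.domRestrict W)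
  rw [LinearMap.range_domRestrict] at h0
  have h1 : LinearMap.ker (f.domRestrict W) = comap W.subtype (LinearMap.ker f ⊓ W) := by
    rw [LinearMap.ker_domRestrict]
    ext x
    simp [x.2]
  have h2 : finrank K (LinearMap.ker (f.domRestrict W)) =
      finrank K ((LinearMap.ker f ⊓ W : Submodule K V)) := by
    rw [h1]
    exact (Submodule.comapSubtypeEquivOfLe inf_le_right).finrank_eq
  rw [h2] at h0
  exact h0

lemma aux_finrank_comap_mkQ (U : Submodule K V) (X : Submodule K (V ⧸ U)) :
    finrank K (X.comap U.mkQ) = finrank K X + finrank K U := by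
  have hle : U ≤ X.comap U.mkQ := by
    intro x hx
    simp only [Submodule.mem_comap]
    have : U.mkQ x = 0 := by
      rw [← LinearMap.mem_ker, Submodule.ker_mkQ]; exact hx
    rw [this]; exact X.zero_mem
  have h0 := aux_finrank_map_add_inf_ker U.mkQ (X.comap U.mkQ)
  rw [Submodule.map_comap_eq, Submodule.range_mkQ, top_inf_eq, Submodule.ker_mkQ,
    inf_eq_left.mpr hle] at h0
  omega

lemma aux_le_card_avoiding (L : Submodule K V) {D : ℕ}
    (hD : D + finrank K L ≤ finrank K V) :
    Fintype.card K ^ (D * (finrank K V - D)) ≤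
      2 ^ D * Nat.card {X : Submodule K V // finrank K X = D ∧ X ⊓ L = ⊥} := by
  classical
  set q := Fintype.card K with hqdef
  have hq2 : 2 ≤ q := Fintype.one_lt_card
  set N := finrank K V with hN
  set ℓ := finrank K L with hl
  have hQfin : Finite (V ⧸ L) := Finite.of_surjective L.mkQ L.mkQ_surjective
  have hrkQ : finrank K (V ⧸ L) = N - ℓ := by
    have := L.finrank_quotient_add_finrank; omega
  -- section of the quotient map
  obtain ⟨σ, hσ⟩ := L.mkQ.exists_rightInverse_of_surjective
    (by rw [Submodule.range_mkQ])
  -- the tuple set T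
  set T := {s : Fin D → V // LinearIndependent K (L.mkQ ∘ s)} with hT
  -- equivalence with pairs
  have e1 : T ≃ {t : Fin D → (V ⧸ L) // LinearIndependent K t} × (Fin D → L) := by
    refine ⟨fun s => (⟨L.mkQ ∘ s.1, s.2⟩, fun i => ⟨s.1 i - σ (L.mkQ (s.1 i)), ?_⟩),
      fun tw => ⟨fun i => σ (tw.1.1 i) + (tw.2 i : V), ?_⟩, fun s => ?_, fun tw => ?_⟩
    · have h0 : L.mkQ (s.1 i - σ (L.mkQ (s.1 i))) = 0 := by
        have h1 := LinearMap.congr_fun hσ (L.mkQ (s.1 i))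
        simp only [LinearMap.coe_comp, Function.comp_apply, LinearMap.id_coe, id_eq] at h1
        rw [map_sub, h1, sub_self]
      rw [Submodule.mkQ_apply] at h0
      exact (Submodule.Quotient.mk_eq_zero L).mp h0
    · have hc : L.mkQ ∘ (fun i => σ (tw.1.1 i) + (tw.2 i : V)) = tw.1.1 := by
        funext i
        have h1 := LinearMap.congr_fun hσ (tw.1.1 i)
        have h2 : L.mkQ (tw.2 i : V) = 0 := by
          rw [← LinearMap.mem_ker, Submodule.ker_mkQ]; exact (tw.2 i).2
        simp only [Function.comp_apply, map_add, h2, add_zero]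
        simpa using h1
      rw [hc]; exact tw.1.2
    · ext i
      have h1 := LinearMap.congr_fun hσ (L.mkQ (s.1 i))
      simp
    · have h2 : ∀ i : Fin D, L.mkQ (tw.2 i : V) = 0 := fun i =>
        (Submodule.Quotient.mk_eq_zero L).mpr (tw.2 i).2
      have h1 : ∀ i : Fin D, L.mkQ (σ (tw.1.1 i)) = tw.1.1 i := fun i => by
        have := LinearMap.congr_fun hσ (tw.1.1 i)
        simpa using this
      ext i
      · have g1 := h1 i
        have g2 := h2 i
        rw [Submodule.mkQ_apply] at g1 g2
        show Submodule.Quotient.mk (σ (tw.1.1 i)) + Submodule.Quotient.mk (tw.2 i : V) = tw.1.1 i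
        rw [g2, add_zero, g1]
      · simp [map_add, h1 i, h2 i]
  -- cardinality of T
  have hD' : D ≤ finrank K (V ⧸ L) := by omega
  have cardT : Nat.card T = (∏ i : Fin D, (q ^ (N - ℓ) - q ^ i.val)) * q ^ (ℓ * D) := by
    rw [Nat.card_congr e1, Nat.card_prod]
    congr 1
    · rw [card_linearIndependent (K := K) (V := V ⧸ L) hD', hrkQ]
    · cases nonempty_fintype L
      rw [Nat.card_eq_fintype_card, Fintype.card_fun, card_eq_pow_finrank (K := K) (V := L),
        ← hqdef, ← hl, ← pow_mul, Fintype.card_fin]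
  -- the map from T to the set of subspaces
  set Tgt := {X : Submodule K V // finrank K X = D ∧ X ⊓ L = ⊥} with hTgt
  have indep_of : ∀ s : T, LinearIndependent K s.1 :=
    fun s => LinearIndependent.of_comp L.mkQ s.2
  let g : T → Tgt := fun s => ⟨span K (Set.range s.1),
    by rw [finrank_span_eq_card (indep_of s), Fintype.card_fin],
    by
      rw [eq_bot_iff]
      rintro x ⟨hx1, hx2⟩
      obtain ⟨c, hc⟩ := (mem_span_range_iff_exists_fun K).mp hx1
      have hx0 : L.mkQ x = 0 := by
        rw [← LinearMap.mem_ker, Submodule.ker_mkQ]; exact hx2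
      have : ∑ i, c i • (L.mkQ ∘ s.1) i = 0 := by
        rw [← hx0, ← hc, map_sum]
        simp
      have hc0 := (Fintype.linearIndependent_iff.mp s.2) c this
      have : x = 0 := by rw [← hc]; simp [hc0]
      simp [this]⟩
  -- fibers of g are small
  have hfib : ∀ X : Tgt, Nat.card {s : T // g s = X} ≤ q ^ (D * D) := by
    intro X
    have : Finite X.1 := Subtype.finite
    have hinj : Function.Injective (fun (s : {s : T // g s = X}) =>
        (fun i => (⟨s.1.1 i, by
          have hsp : span K (Set.range s.1.1) = X.1 := by
            have h' := congrArg Subtype.val s.2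
            exact h'
          rw [← hsp]; exact subset_span (Set.mem_range_self i)⟩ : X.1)) : _ → (Fin D → X.1)) := by
      intro a b hab
      ext i
      exact congrArg Subtype.val (congrFun hab i)
    calc Nat.card {s : T // g s = X} ≤ Nat.card (Fin D → X.1) :=
          Nat.card_le_card_of_injective _ hinj
    _ = q ^ (D * D) := by
        cases nonempty_fintype X.1
        rw [Nat.card_eq_fintype_card, Fintype.card_fun, card_eq_pow_finrank (K := K) (V := X.1),
          X.2.1, Fintype.card_fin, ← pow_mul]
  have hcards : Nat.card T ≤ Nat.card Tgt * q ^ (D * D) := aux_card_le_of_fiber_le g hfib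
  -- put everything together
  have hchain : q ^ (N * D) ≤ 2 ^ D * (Nat.card Tgt * q ^ (D * D)) := by
    calc q ^ (N * D) = q ^ ((N - ℓ) * D) * q ^ (ℓ * D) := by
          rw [← pow_add]; congr 1
          have : (N - ℓ) * D + ℓ * D = N * D := by
            rw [← Nat.add_mul, Nat.sub_add_cancel (by omega)]
          omega
    _ ≤ (2 ^ D * ∏ i : Fin D, (q ^ (N - ℓ) - q ^ i.val)) * q ^ (ℓ * D) :=
          Nat.mul_le_mul_right _ (aux_le_prod hq2 (by omega))
    _ = 2 ^ D * Nat.card T := by rw [cardT]; ring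
    _ ≤ 2 ^ D * (Nat.card Tgt * q ^ (D * D)) := Nat.mul_le_mul_left _ hcards
  have hpos : 0 < q ^ (D * D) := Nat.pow_pos (by omega)
  apply Nat.le_of_mul_le_mul_right _ hpos
  calc q ^ (D * (N - D)) * q ^ (D * D) = q ^ (N * D) := by
        rw [← pow_add]; congr 1
        rw [← Nat.mul_add, Nat.sub_add_cancel (by omega), Nat.mul_comm]
  _ ≤ 2 ^ D * (Nat.card Tgt * q ^ (D * D)) := hchain
  _ = 2 ^ D * Nat.card Tgt * q ^ (D * D) := by ring

end Field

lemma aux_exists_sub {K V : Type*} [Field K] [AddCommGroup V] [Module K V]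
    [FiniteDimensional K V] {P : Submodule K V} {j : ℕ} (hj : j ≤ finrank K P) :
    ∃ U : Submodule K V, U ≤ P ∧ finrank K U = j := by
  obtain ⟨f, hf⟩ := exists_linearIndependent_of_le_finrank (R := K) (M := ↥P) hj
  exact ⟨(span K (Set.range f)).map P.subtype, map_subtype_le _ _, by
    rw [Submodule.finrank_map_subtype_eq, finrank_span_eq_card hf, Fintype.card_fin]⟩

set_option maxHeartbeats 1000000 in
set_option synthInstance.maxHeartbeats 400000 in
/-- For `0 ≤ l ≤ n`, `1 ≤ k, m ≤ n` with `n - k ≥ m - l` and `l ≤ min k m`,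
and any `m`-dimensional linear subspace `W` of `F_p^n`, the number of `(n-k)`-dimensional
linear subspaces `V` with `#(π*_V(W)) ≤ p^l` is comparable to `p^(k(n-k) - (k-l)(m-l))`,
with constants depending only on `n, k, m, l`. Here `π*_V(W)` is the image of `W` in the
quotient `F_p^n / V`, i.e. the set of cosets `x + V`, `x ∈ W`. -/
theorem stmt_2 (n k m l : ℕ) (hl : l ≤ n) (hk1 : 1 ≤ k) (hkn : k ≤ n)
    (hm1 : 1 ≤ m) (hmn : m ≤ n) (hnk : m - l ≤ n - k) (hlk : l ≤ k) (hlm : l ≤ m) :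
    ∃ c C : ℝ, 0 < c ∧ 0 < C ∧ ∀ p : ℕ, p.Prime →
      ∀ W : Submodule (ZMod p) (Fin n → ZMod p), Module.finrank (ZMod p) W = m →
      (c * (p : ℝ) ^ ((k * (n - k) : ℤ) - ((k : ℤ) - l) * ((m : ℤ) - l)) ≤
        Nat.card {V : Submodule (ZMod p) (Fin n → ZMod p) //
          Module.finrank (ZMod p) V = n - k ∧
          Nat.card (V.mkQ '' (W : Set (Fin n → ZMod p))) ≤ p ^ l}) ∧
      ((Nat.card {V : Submodule (ZMod p) (Fin n → ZMod p) //
          Module.finrank (ZMod p) V = n - k ∧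
          Nat.card (V.mkQ '' (W : Set (Fin n → ZMod p))) ≤ p ^ l} : ℝ)
        ≤ C * (p : ℝ) ^ ((k * (n - k) : ℤ) - ((k : ℤ) - l) * ((m : ℤ) - l))) := by
  classical
  obtain ⟨j, hjdef⟩ : ∃ j, j = m - l := ⟨m - l, rfl⟩
  obtain ⟨D, hDdef⟩ : ∃ D, D = (n - k) - (m - l) := ⟨_, rfl⟩
  obtain ⟨d, hddef⟩ : ∃ d, d = n - k := ⟨_, rfl⟩
  obtain ⟨e₀, he₀def⟩ : ∃ e, e = j * l + D * k := ⟨_, rfl⟩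
  refine ⟨((2:ℝ) ^ (j + D))⁻¹, (2:ℝ) ^ (j + D), by positivity, by positivity, ?_⟩
  intro p hp W hW
  haveI := Fact.mk hp
  haveI : NeZero p := ⟨hp.pos.ne'⟩
  haveI : Finite (Submodule (ZMod p) (Fin n → ZMod p)) :=
    Finite.of_injective (fun U => (U : Set (Fin n → ZMod p))) SetLike.coe_injective
  have hcardK : Fintype.card (ZMod p) = p := ZMod.card p
  have hp2 : 2 ≤ p := hp.two_le
  have hrkM : finrank (ZMod p) (Fin n → ZMod p) = n := Module.finrank_fin_fun (ZMod p)
  -- Step A : rewrite the condition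
  have condA : ∀ V : Submodule (ZMod p) (Fin n → ZMod p),
      (Nat.card (V.mkQ '' (W : Set (Fin n → ZMod p))) ≤ p ^ l ↔
        j ≤ finrank (ZMod p) ↥(V ⊓ W)) := by
    intro V
    haveI : Finite ((Fin n → ZMod p) ⧸ V) := Finite.of_surjective V.mkQ V.mkQ_surjective
    have him : V.mkQ '' (W : Set (Fin n → ZMod p)) = ↑(W.map V.mkQ) :=
      (Submodule.map_coe V.mkQ W).symm
    rw [him, SetLike.coe_sort_coe]
    have hcard : Nat.card ↥(W.map V.mkQ) = p ^ finrank (ZMod p) ↥(W.map V.mkQ) := by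
      rw [aux_natCard_eq (K := ZMod p), hcardK]
    have hrn := aux_finrank_map_add_inf_ker V.mkQ W
    rw [Submodule.ker_mkQ, hW] at hrn
    rw [hcard, Nat.pow_le_pow_iff_right hp.one_lt]
    omega
  have hScard : Nat.card {V : Submodule (ZMod p) (Fin n → ZMod p) //
          Module.finrank (ZMod p) V = n - k ∧
          Nat.card (V.mkQ '' (W : Set (Fin n → ZMod p))) ≤ p ^ l} =
      Nat.card {V : Submodule (ZMod p) (Fin n → ZMod p) //
          finrank (ZMod p) V = d ∧ j ≤ finrank (ZMod p) ↥(V ⊓ W)} := by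
    apply Nat.card_congr
    apply Equiv.subtypeEquivRight
    intro V
    rw [hddef]
    exact and_congr_right fun _ => condA V
  rw [hScard]
  set S' := {V : Submodule (ZMod p) (Fin n → ZMod p) //
      finrank (ZMod p) V = d ∧ j ≤ finrank (ZMod p) ↥(V ⊓ W)} with hS'def
  -- Step B : the set A of j-dimensional subspaces of W
  set A := {U : Submodule (ZMod p) (Fin n → ZMod p) // U ≤ W ∧ finrank (ZMod p) U = j}
    with hAdef
  have eA : A ≃ {U' : Submodule (ZMod p) ↥W // finrank (ZMod p) U' = j} :=
    { toFun := fun U => ⟨comap W.subtype U.1,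
        ((Submodule.comapSubtypeEquivOfLe U.2.1).finrank_eq).trans U.2.2⟩
      invFun := fun U' => ⟨U'.1.map W.subtype, map_subtype_le W U'.1, by
        rw [Submodule.finrank_map_subtype_eq]; exact U'.2⟩
      left_inv := fun U => Subtype.ext (by
        show (comap W.subtype U.1).map W.subtype = U.1
        rw [Submodule.map_comap_subtype]; exact inf_eq_right.mpr U.2.1)
      right_inv := fun U' => Subtype.ext (by
        show comap W.subtype (U'.1.map W.subtype) = U'.1
        rw [Submodule.comap_map_eq, Submodule.ker_subtype, sup_bot_eq]) }
  have hjm : j ≤ finrank (ZMod p) ↥W := by rw [hW]; omega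
  have hmj : m - j = l := by omega
  have hAcard_le : Nat.card A ≤ 2 ^ j * p ^ (j * l) := by
    rw [Nat.card_congr eA]
    have h := aux_card_subspaces_le (K := ZMod p) (V := ↥W) hjm
    rwa [hW, hmj, hcardK] at h
  have hAcard_ge : p ^ (j * l) ≤ 2 ^ j * Nat.card A := by
    rw [Nat.card_congr eA]
    have h := aux_le_card_subspaces (K := ZMod p) (V := ↥W) hjm
    rwa [hW, hmj, hcardK] at h
  have hjd : j ≤ d := by omega
  have hdn : d ≤ n := by omega
  -- Step C : upper bound
  let f_up : S' → A := fun x =>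
    ⟨(aux_exists_sub x.2.2).choose,
      le_trans (aux_exists_sub x.2.2).choose_spec.1 inf_le_right,
      (aux_exists_sub x.2.2).choose_spec.2⟩
  have hup : Nat.card S' ≤ Nat.card A * (2 ^ D * p ^ (D * k)) := by
    apply aux_card_le_of_fiber_le f_up
    intro U
    haveI : Finite ((Fin n → ZMod p) ⧸ U.1) :=
      Finite.of_surjective U.1.mkQ U.1.mkQ_surjective
    haveI : Finite (Submodule (ZMod p) ((Fin n → ZMod p) ⧸ U.1)) :=
      Finite.of_injective (SetLike.coe : Submodule (ZMod p) ((Fin n → ZMod p) ⧸ U.1) → Set ((Fin n → ZMod p) ⧸ U.1)) SetLike.coe_injective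
    have hrkQ : finrank (ZMod p) ((Fin n → ZMod p) ⧸ U.1) = n - j := by
      have h := U.1.finrank_quotient_add_finrank
      rw [hrkM, U.2.2] at h; omega
    have hUx : ∀ x : {x : S' // f_up x = U}, U.1 ≤ x.1.1 := by
      intro x
      have h1 : (aux_exists_sub x.1.2.2).choose = U.1 := congrArg Subtype.val x.2
      have h2 := (aux_exists_sub x.1.2.2).choose_spec.1
      rw [h1] at h2
      exact le_trans h2 inf_le_left
    have hDfr : ∀ x : {x : S' // f_up x = U},
        finrank (ZMod p) ↥((x.1.1 : Submodule (ZMod p) (Fin n → ZMod p)).map U.1.mkQ) = D := by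
      intro x
      have h := aux_finrank_map_add_inf_ker U.1.mkQ x.1.1
      rw [Submodule.ker_mkQ, inf_eq_left.mpr (hUx x), x.1.2.1, U.2.2] at h
      omega
    have hinj : Function.Injective (fun x : {x : S' // f_up x = U} =>
        (⟨(x.1.1 : Submodule (ZMod p) (Fin n → ZMod p)).map U.1.mkQ, hDfr x⟩ :
        {X : Submodule (ZMod p) ((Fin n → ZMod p) ⧸ U.1) // finrank (ZMod p) X = D})) := by
      intro a b hab
      have h1 : (a.1.1 : Submodule (ZMod p) (Fin n → ZMod p)).map U.1.mkQ =
          (b.1.1 : Submodule (ZMod p) (Fin n → ZMod p)).map U.1.mkQ :=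
        congrArg Subtype.val hab
      have h2 : ∀ x : {x : S' // f_up x = U},
          comap U.1.mkQ ((x.1.1 : Submodule (ZMod p) (Fin n → ZMod p)).map U.1.mkQ) = x.1.1 := by
        intro x
        rw [Submodule.comap_map_eq, Submodule.ker_mkQ, sup_eq_left.mpr (hUx x)]
      have h3 := (h2 a).symm.trans ((congrArg (comap U.1.mkQ) h1).trans (h2 b))
      exact Subtype.ext (Subtype.ext h3)
    calc Nat.card {x : S' // f_up x = U} ≤
        Nat.card {X : Submodule (ZMod p) ((Fin n → ZMod p) ⧸ U.1) // finrank (ZMod p) X = D} :=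
          Nat.card_le_card_of_injective _ hinj
    _ ≤ 2 ^ D * p ^ (D * k) := by
        have h := aux_card_subspaces_le (K := ZMod p) (V := (Fin n → ZMod p) ⧸ U.1)
          (j := D) (by rw [hrkQ]; omega)
        rw [hrkQ, hcardK] at h
        have hnjD : n - j - D = k := by omega
        rwa [hnjD] at h
  -- Step D : lower bound
  set S₀ := {V : Submodule (ZMod p) (Fin n → ZMod p) //
      finrank (ZMod p) V = d ∧ finrank (ZMod p) ↥(V ⊓ W) = j} with hS₀def
  have hS₀S' : Nat.card S₀ ≤ Nat.card S' := by
    apply Nat.card_le_card_of_injective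
      (fun x : S₀ => (⟨x.1, x.2.1, le_of_eq x.2.2.symm⟩ : S'))
    intro a b hab
    have h := congrArg (fun y : S' => y.1) hab
    exact Subtype.ext h
  let f_low : S₀ → A := fun x => ⟨x.1 ⊓ W, inf_le_right, x.2.2⟩
  have hlow0 : Nat.card A * p ^ (D * k) ≤ 2 ^ D * Nat.card S₀ := by
    apply aux_mul_le_card f_low
    intro U
    haveI : Finite ((Fin n → ZMod p) ⧸ U.1) :=
      Finite.of_surjective U.1.mkQ U.1.mkQ_surjective
    haveI : Finite (Submodule (ZMod p) ((Fin n → ZMod p) ⧸ U.1)) :=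
      Finite.of_injective (SetLike.coe : Submodule (ZMod p) ((Fin n → ZMod p) ⧸ U.1) → Set ((Fin n → ZMod p) ⧸ U.1)) SetLike.coe_injective
    have hrkQ : finrank (ZMod p) ((Fin n → ZMod p) ⧸ U.1) = n - j := by
      have h := U.1.finrank_quotient_add_finrank
      rw [hrkM, U.2.2] at h; omega
    have hLrk : finrank (ZMod p) ↥(W.map U.1.mkQ) = l := by
      have h := aux_finrank_map_add_inf_ker U.1.mkQ W
      rw [Submodule.ker_mkQ, inf_eq_left.mpr U.2.1, hW, U.2.2] at h
      omega
    have hDl : D + finrank (ZMod p) ↥(W.map U.1.mkQ) ≤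
        finrank (ZMod p) ((Fin n → ZMod p) ⧸ U.1) := by
      rw [hLrk, hrkQ]; omega
    have havoid := aux_le_card_avoiding (K := ZMod p) (V := (Fin n → ZMod p) ⧸ U.1)
      (W.map U.1.mkQ) hDl
    rw [hrkQ, hcardK] at havoid
    have hnjD : n - j - D = k := by omega
    rw [hnjD] at havoid
    -- facts about `comap U.1.mkQ X` for avoiding X
    set TgtU := {X : Submodule (ZMod p) ((Fin n → ZMod p) ⧸ U.1) //
        finrank (ZMod p) X = D ∧ X ⊓ W.map U.1.mkQ = ⊥} with hTgtUdef
    have hUleV : ∀ X : TgtU, U.1 ≤ comap U.1.mkQ X.1 := by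
      intro X x hx
      simp only [Submodule.mem_comap]
      have h0 : U.1.mkQ x = 0 := by
        rw [← LinearMap.mem_ker, Submodule.ker_mkQ]; exact hx
      rw [h0]; exact X.1.zero_mem
    have hVWU : ∀ X : TgtU, (comap U.1.mkQ X.1) ⊓ W = U.1 := by
      intro X
      apply le_antisymm
      · rintro x ⟨hxV, hxW⟩
        have h1 : U.1.mkQ x ∈ X.1 := hxV
        have h2 : U.1.mkQ x ∈ W.map U.1.mkQ := Submodule.mem_map_of_mem hxW
        have h3 : U.1.mkQ x ∈ X.1 ⊓ W.map U.1.mkQ := ⟨h1, h2⟩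
        rw [X.2.2] at h3
        have h4 : U.1.mkQ x = 0 := h3
        rw [← Submodule.ker_mkQ U.1]
        exact h4
      · exact le_inf (hUleV X) U.2.1
    have hVfr : ∀ X : TgtU, finrank (ZMod p) ↥(comap U.1.mkQ X.1) = d := by
      intro X
      rw [aux_finrank_comap_mkQ, X.2.1, U.2.2]
      omega
    have hVWfr : ∀ X : TgtU, finrank (ZMod p) ↥((comap U.1.mkQ X.1) ⊓ W) = j := by
      intro X
      rw [hVWU X, U.2.2]
    let g : TgtU → {x : S₀ // f_low x = U} := fun X =>
      ⟨⟨comap U.1.mkQ X.1, hVfr X, hVWfr X⟩, Subtype.ext (hVWU X)⟩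
    have hginj : Function.Injective g := by
      intro a b hab
      have h1 : comap U.1.mkQ a.1 = comap U.1.mkQ b.1 :=
        congrArg Subtype.val (congrArg Subtype.val hab)
      have h2 : ∀ X : TgtU, map U.1.mkQ (comap U.1.mkQ X.1) = X.1 := by
        intro X
        rw [Submodule.map_comap_eq, Submodule.range_mkQ, top_inf_eq]
      have h3 := (h2 a).symm.trans ((congrArg (map U.1.mkQ) h1).trans (h2 b))
      exact Subtype.ext h3
    calc p ^ (D * k) ≤ 2 ^ D * Nat.card TgtU := havoid
    _ ≤ 2 ^ D * Nat.card {x : S₀ // f_low x = U} :=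
        Nat.mul_le_mul_left _ (Nat.card_le_card_of_injective g hginj)
  -- Step E : combine
  have hup2 : Nat.card S' ≤ 2 ^ (j + D) * p ^ e₀ := by
    calc Nat.card S' ≤ Nat.card A * (2 ^ D * p ^ (D * k)) := hup
    _ ≤ (2 ^ j * p ^ (j * l)) * (2 ^ D * p ^ (D * k)) :=
        Nat.mul_le_mul_right _ hAcard_le
    _ = 2 ^ (j + D) * p ^ e₀ := by rw [he₀def, pow_add, pow_add]; ring
  have hlow2 : p ^ e₀ ≤ 2 ^ (j + D) * Nat.card S' := by
    calc p ^ e₀ = p ^ (j * l) * p ^ (D * k) := by rw [he₀def, pow_add]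
    _ ≤ (2 ^ j * Nat.card A) * p ^ (D * k) := Nat.mul_le_mul_right _ hAcard_ge
    _ = 2 ^ j * (Nat.card A * p ^ (D * k)) := by ring
    _ ≤ 2 ^ j * (2 ^ D * Nat.card S₀) := Nat.mul_le_mul_left _ hlow0
    _ = 2 ^ (j + D) * Nat.card S₀ := by rw [pow_add]; ring
    _ ≤ 2 ^ (j + D) * Nat.card S' := Nat.mul_le_mul_left _ hS₀S'
  -- the exponent identity
  have hEq : ((k * (n - k) : ℤ) - ((k : ℤ) - l) * ((m : ℤ) - l)) = (e₀ : ℤ) := by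
    have hj' : (j : ℤ) = (m : ℤ) - l := by rw [hjdef]; push_cast [Nat.cast_sub hlm]; ring
    have hD' : (D : ℤ) = ((n : ℤ) - k) - ((m : ℤ) - l) := by
      rw [hDdef]
      push_cast [Nat.cast_sub hnk, Nat.cast_sub hkn, Nat.cast_sub hlm]
      ring
    rw [he₀def]
    push_cast [Nat.cast_sub hkn, hj', hD']
    ring
  have hpow : (p : ℝ) ^ ((k * (n - k) : ℤ) - ((k : ℤ) - l) * ((m : ℤ) - l)) =
      (p : ℝ) ^ e₀ := by
    rw [hEq, zpow_natCast]
  rw [hpow]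
  have h2pos : (0:ℝ) < 2 ^ (j + D) := by positivity
  constructor
  · rw [inv_mul_le_iff₀ h2pos]
    have := Nat.cast_le (α := ℝ) |>.mpr hlow2
    push_cast at this
    linarith
  · have := Nat.cast_le (α := ℝ) |>.mpr hup2
    push_cast at this
    linarith
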